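/- Let P and P' be projective planes and let f = (π, λ) be an epimorphism from P onto P', i.e., π maps points of P onto points of P', λ maps lines of P onto lines of P', both π and λ are surjective, and whenever a point p is incident with a line M in P, the point π(p) is incident with the line λ(M) in P'. Then either π and λ are both bijective, or every fiber of π and every fiber of λ is infinite. -/

import Mathlib

/-- A point-line incidence relation `I` is a projective plane if any two distinct
points lie on a unique common line, any two distinct lines meet in a unique point,
and there exist four points no three of which are incident with a common line. -/
structure IsProjectivePlane {P L : Type*} (I : P → L → Prop) : Prop where
  line_unique : ∀ p q : P, p ≠ q → ∃! M : L, I p M ∧ I q M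
  point_unique : ∀ M N : L, M ≠ N → ∃! p : P, I p M ∧ I p N
  nondeg : ∃ a b c d : P, a ≠ b ∧ a ≠ c ∧ a ≠ d ∧ b ≠ c ∧ b ≠ d ∧ c ≠ d ∧
    ∀ M : L, ¬(I a M ∧ I b M ∧ I c M) ∧ ¬(I a M ∧ I b M ∧ I d M) ∧
      ¬(I a M ∧ I c M ∧ I d M) ∧ ¬(I b M ∧ I c M ∧ I d M)

namespace SHP


/-- Two sets in bijection via a relation that is "unique both ways" have equal `ncard`
and are simultaneously finite. -/
lemma card_helper {α β : Type*} {A : Set α} {B : Set β} (r : α → β → Prop)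
    (hex : ∀ a ∈ A, ∃ b, b ∈ B ∧ r a b)
    (hex' : ∀ b ∈ B, ∃ a, a ∈ A ∧ r a b)
    (hu : ∀ a₁ a₂ b, a₁ ∈ A → a₂ ∈ A → b ∈ B → r a₁ b → r a₂ b → a₁ = a₂)
    (hu' : ∀ a b₁ b₂, a ∈ A → b₁ ∈ B → b₂ ∈ B → r a b₁ → r a b₂ → b₁ = b₂) :
    (A.Finite ↔ B.Finite) ∧ A.ncard = B.ncard := by
  classical
  rcases A.eq_empty_or_nonempty with hA | ⟨a₀, ha₀⟩
  · have hB : B = ∅ := by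
      ext b
      simp only [Set.mem_empty_iff_false, iff_false]
      intro hb
      obtain ⟨a, ha, -⟩ := hex' b hb
      rw [hA] at ha
      exact ha
    simp [hA, hB]
  · obtain ⟨b₀, hb₀, -⟩ := hex a₀ ha₀
    set f : α → β := fun a => if h : a ∈ A then (hex a h).choose else b₀ with hf
    have hfmem : ∀ a (h : a ∈ A), f a ∈ B ∧ r a (f a) := by
      intro a h
      simp only [hf, dif_pos h]
      exact (hex a h).choose_spec
    have hinj : Set.InjOn f A := by
      intro a₁ h₁ a₂ h₂ heq
      have s₁ := hfmem a₁ h₁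
      have s₂ := hfmem a₂ h₂
      exact hu a₁ a₂ (f a₁) h₁ h₂ s₁.1 s₁.2 (heq ▸ s₂.2)
    have himg : f '' A = B := by
      apply Set.Subset.antisymm
      · rintro b ⟨a, ha, rfl⟩; exact (hfmem a ha).1
      · intro b hb
        obtain ⟨a, ha, hr⟩ := hex' b hb
        have s := hfmem a ha
        exact ⟨a, ha, hu' a (f a) b ha s.1 hb s.2 hr⟩
    constructor
    · constructor
      · intro h; rw [← himg]; exact h.image f
      · intro h; rw [← himg] at h; exact Set.Finite.of_finite_image h hinj
    · rw [← himg, Set.ncard_image_of_injOn hinj]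

lemma ncard_biUnion_eq {ι α : Type*} (s : Finset ι) (f : ι → Set α)
    (hfin : ∀ i ∈ s, (f i).Finite)
    (hdisj : ∀ i ∈ s, ∀ j ∈ s, i ≠ j → Disjoint (f i) (f j)) :
    (⋃ i ∈ s, f i).ncard = ∑ i ∈ s, (f i).ncard := by
  classical
  induction s using Finset.induction_on with
  | empty => simp
  | @insert i s hi ih =>
    have hins : (⋃ j ∈ insert i s, f j) = f i ∪ ⋃ j ∈ s, f j := by
      simp [Set.biUnion_insert]
    rw [hins]
    have hfi : (f i).Finite := hfin i (Finset.mem_insert_self i s)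
    have hfrest : (⋃ j ∈ s, f j).Finite := by
      apply Set.Finite.biUnion s.finite_toSet
      intro j hj
      exact hfin j (Finset.mem_insert_of_mem hj)
    have hd : Disjoint (f i) (⋃ j ∈ s, f j) := by
      rw [Set.disjoint_iUnion₂_right]
      intro j hj
      exact hdisj i (Finset.mem_insert_self i s) j (Finset.mem_insert_of_mem hj)
        (fun h => hi (h ▸ hj))
    rw [Set.ncard_union_eq hd hfi hfrest, Finset.sum_insert hi,
      ih (fun j hj => hfin j (Finset.mem_insert_of_mem hj))
        (fun j hj k hk hjk => hdisj j (Finset.mem_insert_of_mem hj) k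
          (Finset.mem_insert_of_mem hk) hjk)]



def NdgQuad {X Y : Type*} (J : X → Y → Prop) : Prop :=
  ∃ a b c d : X, a ≠ b ∧ a ≠ c ∧ a ≠ d ∧ b ≠ c ∧ b ≠ d ∧ c ≠ d ∧
    ∀ M : Y, ¬(J a M ∧ J b M ∧ J c M) ∧ ¬(J a M ∧ J b M ∧ J d M) ∧
      ¬(J a M ∧ J c M ∧ J d M) ∧ ¬(J b M ∧ J c M ∧ J d M)

/-- In a projective-plane-like incidence structure, through every point there are
three distinct lines. -/
lemma three_lines_aux {P L : Type*} (I : P → L → Prop)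
    (hJ : ∀ p q : P, p ≠ q → ∃! M : L, I p M ∧ I q M)
    (hM : ∀ M N : L, M ≠ N → ∃! x : P, I x M ∧ I x N)
    (hq : NdgQuad I) (p : P) :
    ∃ C₁ C₂ C₃ : L, I p C₁ ∧ I p C₂ ∧ I p C₃ ∧ C₁ ≠ C₂ ∧ C₁ ≠ C₃ ∧ C₂ ≠ C₃ := by
  obtain ⟨a, b, c, d, hab, hac, had, hbc, hbd, hcd, hcol⟩ := hq
  have uL : ∀ {x y : P} {G H : L}, x ≠ y → I x G → I y G → I x H → I y H → G = H :=
    fun hxy h1 h2 h3 h4 => (hJ _ _ hxy).unique ⟨h1, h2⟩ ⟨h3, h4⟩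
  have uP : ∀ {G H : L} {x y : P}, G ≠ H → I x G → I x H → I y G → I y H → x = y :=
    fun hGH h1 h2 h3 h4 => (hM _ _ hGH).unique ⟨h1, h2⟩ ⟨h3, h4⟩
  obtain ⟨Sab, ⟨ha_ab, hb_ab⟩, -⟩ := hJ a b hab
  obtain ⟨Sac, ⟨ha_ac, hc_ac⟩, -⟩ := hJ a c hac
  obtain ⟨Sad, ⟨ha_ad, hd_ad⟩, -⟩ := hJ a d had
  obtain ⟨Sbc, ⟨hb_bc, hc_bc⟩, -⟩ := hJ b c hbc
  obtain ⟨Sbd, ⟨hb_bd, hd_bd⟩, -⟩ := hJ b d hbd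
  obtain ⟨Scd, ⟨hc_cd, hd_cd⟩, -⟩ := hJ c d hcd
  have hc_ab : ¬ I c Sab := fun h => (hcol Sab).1 ⟨ha_ab, hb_ab, h⟩
  have hd_ab : ¬ I d Sab := fun h => (hcol Sab).2.1 ⟨ha_ab, hb_ab, h⟩
  have hb_ac : ¬ I b Sac := fun h => (hcol Sac).1 ⟨ha_ac, h, hc_ac⟩
  have hd_ac : ¬ I d Sac := fun h => (hcol Sac).2.2.1 ⟨ha_ac, hc_ac, h⟩
  have hb_ad : ¬ I b Sad := fun h => (hcol Sad).2.1 ⟨ha_ad, h, hd_ad⟩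
  have hc_ad : ¬ I c Sad := fun h => (hcol Sad).2.2.1 ⟨ha_ad, h, hd_ad⟩
  have ha_bc : ¬ I a Sbc := fun h => (hcol Sbc).1 ⟨h, hb_bc, hc_bc⟩
  have hd_bc : ¬ I d Sbc := fun h => (hcol Sbc).2.2.2 ⟨hb_bc, hc_bc, h⟩
  have ha_bd : ¬ I a Sbd := fun h => (hcol Sbd).2.1 ⟨h, hb_bd, hd_bd⟩
  have hc_bd : ¬ I c Sbd := fun h => (hcol Sbd).2.2.2 ⟨hb_bd, h, hd_bd⟩
  have ha_cd : ¬ I a Scd := fun h => (hcol Scd).2.2.1 ⟨h, hc_cd, hd_cd⟩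
  have hb_cd : ¬ I b Scd := fun h => (hcol Scd).2.2.2 ⟨h, hc_cd, hd_cd⟩
  by_cases hpa : p = a
  · subst hpa
    exact ⟨Sab, Sac, Sad, ha_ab, ha_ac, ha_ad,
      fun h => hc_ab (h ▸ hc_ac), fun h => hd_ab (h ▸ hd_ad), fun h => hd_ac (h ▸ hd_ad)⟩
  by_cases hpb : p = b
  · subst hpb
    exact ⟨Sab, Sbc, Sbd, hb_ab, hb_bc, hb_bd,
      fun h => hc_ab (h ▸ hc_bc), fun h => hd_ab (h ▸ hd_bd), fun h => hd_bc (h ▸ hd_bd)⟩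
  by_cases hpc : p = c
  · subst hpc
    exact ⟨Sac, Sbc, Scd, hc_ac, hc_bc, hc_cd,
      fun h => hb_ac (h ▸ hb_bc), fun h => hd_ac (h ▸ hd_cd), fun h => hb_cd (h.symm ▸ hb_bc)⟩
  by_cases hpd : p = d
  · subst hpd
    exact ⟨Sad, Sbd, Scd, hd_ad, hd_bd, hd_cd,
      fun h => hb_ad (h ▸ hb_bd), fun h => hc_ad (h ▸ hc_cd), fun h => hc_bd (h ▸ hc_cd)⟩
  -- p is none of the four quadrangle points
  obtain ⟨Spa, ⟨hp_pa, ha_pa⟩, -⟩ := hJ p a hpa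
  obtain ⟨Spb, ⟨hp_pb, hb_pb⟩, -⟩ := hJ p b hpb
  obtain ⟨Spc, ⟨hp_pc, hc_pc⟩, -⟩ := hJ p c hpc
  obtain ⟨Spd, ⟨hp_pd, hd_pd⟩, -⟩ := hJ p d hpd
  have hSabScd : Sab ≠ Scd := fun h => hc_ab (h ▸ hc_cd)
  by_cases h1 : I p Sab <;> by_cases h2 : I p Scd
  · -- p on Sab and Scd ; third line through the diagonal point f = Sac ∩ Sbd
    have hSacSbd : Sac ≠ Sbd := fun h => ha_bd (h ▸ ha_ac)
    obtain ⟨f, ⟨hf_ac, hf_bd⟩, -⟩ := hM Sac Sbd hSacSbd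
    have hSabSac : Sab ≠ Sac := fun h => hc_ab (h ▸ hc_ac)
    have hpf : p ≠ f := by
      intro h
      have : p = a := uP hSabSac h1 (h ▸ hf_ac) ha_ab ha_ac
      exact hpa this
    obtain ⟨Spf, ⟨hp_pf, hf_pf⟩, -⟩ := hJ p f hpf
    refine ⟨Sab, Scd, Spf, h1, h2, hp_pf, hSabScd, ?_, ?_⟩
    · intro h
      have hfa : f = a := uP hSabSac (h.symm ▸ hf_pf) hf_ac ha_ab ha_ac
      exact ha_bd (hfa ▸ hf_bd)
    · intro h
      have hScdSac : Scd ≠ Sac := fun h' => ha_cd (h' ▸ ha_ac)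
      have hfc : f = c := uP hScdSac (h.symm ▸ hf_pf) hf_ac hc_cd hc_ac
      exact hc_bd (hfc ▸ hf_bd)
  · -- p on Sab, not on Scd : use Sab, Spc, Spd
    refine ⟨Sab, Spc, Spd, h1, hp_pc, hp_pd, ?_, ?_, ?_⟩
    · intro h; exact hc_ab (h ▸ hc_pc)
    · intro h; exact hd_ab (h ▸ hd_pd)
    · intro h
      have : Spc = Scd := uL hcd hc_pc (h ▸ hd_pd) hc_cd hd_cd
      exact h2 (this ▸ hp_pc)
  · -- p on Scd, not on Sab : use Scd, Spa, Spb
    refine ⟨Scd, Spa, Spb, h2, hp_pa, hp_pb, ?_, ?_, ?_⟩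
    · intro h; exact ha_cd (h ▸ ha_pa)
    · intro h; exact hb_cd (h ▸ hb_pb)
    · intro h
      have : Spa = Sab := uL hab ha_pa (h ▸ hb_pb) ha_ab hb_ab
      exact h1 (this ▸ hp_pa)
  · -- p on neither Sab nor Scd
    have hSpaSpb : Spa ≠ Spb := by
      intro h
      have : Spa = Sab := uL hab ha_pa (h ▸ hb_pb) ha_ab hb_ab
      exact h1 (this ▸ hp_pa)
    have hSpcSpd : Spc ≠ Spd := by
      intro h
      have : Spc = Scd := uL hcd hc_pc (h ▸ hd_pd) hc_cd hd_cd
      exact h2 (this ▸ hp_pc)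
    by_cases e1 : Spc = Spa
    · by_cases e2 : Spd = Spb
      · -- p lies on Sac and Sbd : diagonal case
        have hpac : Spa = Sac := uL hac ha_pa (e1 ▸ hc_pc) ha_ac hc_ac
        have hpbd : Spb = Sbd := uL hbd hb_pb (e2 ▸ hd_pd) hb_bd hd_bd
        have hIpSac : I p Sac := hpac ▸ hp_pa
        have hIpSbd : I p Sbd := hpbd ▸ hp_pb
        obtain ⟨f, ⟨hf_ab, hf_cd⟩, -⟩ := hM Sab Scd hSabScd
        have hpf : p ≠ f := fun h => h1 (h ▸ hf_ab)
        obtain ⟨Spf, ⟨hp_pf, hf_pf⟩, -⟩ := hJ p f hpf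
        have hSacSbd : Sac ≠ Sbd := fun h => ha_bd (h ▸ ha_ac)
        refine ⟨Sac, Sbd, Spf, hIpSac, hIpSbd, hp_pf, hSacSbd, ?_, ?_⟩
        · intro h
          have hSabSac : Sab ≠ Sac := fun h' => hc_ab (h' ▸ hc_ac)
          have hfa : f = a := uP hSabSac hf_ab (h.symm ▸ hf_pf) ha_ab ha_ac
          exact ha_cd (hfa ▸ hf_cd)
        · intro h
          have hSabSbd : Sab ≠ Sbd := fun h' => hd_ab (h' ▸ hd_bd)
          have hfb : f = b := uP hSabSbd hf_ab (h.symm ▸ hf_pf) hb_ab hb_bd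
          exact hb_cd (hfb ▸ hf_cd)
      · -- triple Spa, Spb, Spd
        refine ⟨Spa, Spb, Spd, hp_pa, hp_pb, hp_pd, hSpaSpb, ?_, fun h => e2 h.symm⟩
        intro h
        exact hSpcSpd (e1.trans h)
    · by_cases e3 : Spc = Spb
      · by_cases e4 : Spd = Spa
        · -- p lies on Sad and Sbc : diagonal case
          have hpad : Spa = Sad := uL had ha_pa (e4 ▸ hd_pd) ha_ad hd_ad
          have hpbc : Spb = Sbc := uL hbc hb_pb (e3 ▸ hc_pc) hb_bc hc_bc
          have hIpSad : I p Sad := hpad ▸ hp_pa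
          have hIpSbc : I p Sbc := hpbc ▸ hp_pb
          obtain ⟨f, ⟨hf_ab, hf_cd⟩, -⟩ := hM Sab Scd hSabScd
          have hpf : p ≠ f := fun h => h1 (h ▸ hf_ab)
          obtain ⟨Spf, ⟨hp_pf, hf_pf⟩, -⟩ := hJ p f hpf
          have hSadSbc : Sad ≠ Sbc := fun h => ha_bc (h ▸ ha_ad)
          refine ⟨Sad, Sbc, Spf, hIpSad, hIpSbc, hp_pf, hSadSbc, ?_, ?_⟩
          · intro h
            have hSabSad : Sab ≠ Sad := fun h' => hd_ab (h' ▸ hd_ad)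
            have hfa : f = a := uP hSabSad hf_ab (h.symm ▸ hf_pf) ha_ab ha_ad
            exact ha_cd (hfa ▸ hf_cd)
          · intro h
            have hSabSbc : Sab ≠ Sbc := fun h' => hc_ab (h' ▸ hc_bc)
            have hfb : f = b := uP hSabSbc hf_ab (h.symm ▸ hf_pf) hb_ab hb_bc
            exact hb_cd (hfb ▸ hf_cd)
        · -- triple Spa, Spc, Spd
          refine ⟨Spa, Spc, Spd, hp_pa, hp_pc, hp_pd, fun h => e1 h.symm, fun h => e4 h.symm,
            hSpcSpd⟩
      · -- triple Spa, Spb, Spc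
        exact ⟨Spa, Spb, Spc, hp_pa, hp_pb, hp_pc, hSpaSpb, fun h => e1 h.symm,
          fun h => e3 h.symm⟩

lemma three_lines {P L : Type*} (I : P → L → Prop)
    (hJ : ∀ p q : P, p ≠ q → ∃! M : L, I p M ∧ I q M)
    (hM : ∀ M N : L, M ≠ N → ∃! x : P, I x M ∧ I x N)
    (hq : NdgQuad I) (p : P) (M N : L) : ∃ C, I p C ∧ C ≠ M ∧ C ≠ N := by
  obtain ⟨C₁, C₂, C₃, h1, h2, h3, h12, h13, h23⟩ := three_lines_aux I hJ hM hq p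
  by_cases e1 : C₁ ≠ M ∧ C₁ ≠ N
  · exact ⟨C₁, h1, e1.1, e1.2⟩
  by_cases e2 : C₂ ≠ M ∧ C₂ ≠ N
  · exact ⟨C₂, h2, e2.1, e2.2⟩
  rw [not_and_or, not_ne_iff, not_ne_iff] at e1 e2
  refine ⟨C₃, h3, ?_, ?_⟩ <;> rintro rfl
  · rcases e1 with rfl | rfl
    · exact h13 rfl
    · rcases e2 with rfl | rfl
      · exact h23 rfl
      · exact h12 rfl
  · rcases e1 with rfl | rfl
    · rcases e2 with rfl | rfl
      · exact h12 rfl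
      · exact h23 rfl
    · exact h13 rfl

lemma quad_dual {P L : Type*} (I : P → L → Prop)
    (hJ : ∀ p q : P, p ≠ q → ∃! M : L, I p M ∧ I q M)
    (hM : ∀ M N : L, M ≠ N → ∃! x : P, I x M ∧ I x N)
    (hq : NdgQuad I) : NdgQuad (fun (M : L) (p : P) => I p M) := by
  obtain ⟨a, b, c, d, hab, hac, had, hbc, hbd, hcd, hcol⟩ := hq
  have uP : ∀ {G H : L} {x y : P}, G ≠ H → I x G → I x H → I y G → I y H → x = y :=
    fun hGH h1 h2 h3 h4 => (hM _ _ hGH).unique ⟨h1, h2⟩ ⟨h3, h4⟩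
  obtain ⟨Sab, ⟨ha_ab, hb_ab⟩, -⟩ := hJ a b hab
  obtain ⟨Sbc, ⟨hb_bc, hc_bc⟩, -⟩ := hJ b c hbc
  obtain ⟨Scd, ⟨hc_cd, hd_cd⟩, -⟩ := hJ c d hcd
  obtain ⟨Sad, ⟨ha_ad, hd_ad⟩, -⟩ := hJ a d had
  have hc_ab : ¬ I c Sab := fun h => (hcol Sab).1 ⟨ha_ab, hb_ab, h⟩
  have hd_ab : ¬ I d Sab := fun h => (hcol Sab).2.1 ⟨ha_ab, hb_ab, h⟩
  have ha_bc : ¬ I a Sbc := fun h => (hcol Sbc).1 ⟨h, hb_bc, hc_bc⟩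
  have hd_bc : ¬ I d Sbc := fun h => (hcol Sbc).2.2.2 ⟨hb_bc, hc_bc, h⟩
  have ha_cd : ¬ I a Scd := fun h => (hcol Scd).2.2.1 ⟨h, hc_cd, hd_cd⟩
  have hb_cd : ¬ I b Scd := fun h => (hcol Scd).2.2.2 ⟨h, hc_cd, hd_cd⟩
  have hb_ad : ¬ I b Sad := fun h => (hcol Sad).2.1 ⟨ha_ad, h, hd_ad⟩
  have hc_ad : ¬ I c Sad := fun h => (hcol Sad).2.2.1 ⟨ha_ad, h, hd_ad⟩
  have h12 : Sab ≠ Sbc := fun h => hc_ab (h ▸ hc_bc)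
  have h13 : Sab ≠ Scd := fun h => hc_ab (h ▸ hc_cd)
  have h14 : Sab ≠ Sad := fun h => hd_ab (h ▸ hd_ad)
  have h23 : Sbc ≠ Scd := fun h => hd_bc (h ▸ hd_cd)
  have h24 : Sbc ≠ Sad := fun h => ha_bc (h ▸ ha_ad)
  have h34 : Scd ≠ Sad := fun h => ha_cd (h ▸ ha_ad)
  refine ⟨Sab, Sbc, Scd, Sad, h12, h13, h14, h23, h24, h34, ?_⟩
  intro x
  refine ⟨?_, ?_, ?_, ?_⟩
  · rintro ⟨hx1, hx2, hx3⟩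
    have : x = b := uP h12 hx1 hx2 hb_ab hb_bc
    exact hb_cd (this ▸ hx3)
  · rintro ⟨hx1, hx2, hx4⟩
    have : x = b := uP h12 hx1 hx2 hb_ab hb_bc
    exact hb_ad (this ▸ hx4)
  · rintro ⟨hx1, hx3, hx4⟩
    have : x = a := uP h14 hx1 hx4 ha_ab ha_ad
    exact ha_cd (this ▸ hx3)
  · rintro ⟨hx2, hx3, hx4⟩
    have : x = c := uP h23 hx2 hx3 hc_bc hc_cd
    exact hc_ad (this ▸ hx4)



structure EpiCtx (P L P' L' : Type*) where
  I : P → L → Prop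
  I' : P' → L' → Prop
  pi : P → P'
  lam : L → L'
  hJ : ∀ p q : P, p ≠ q → ∃! M : L, I p M ∧ I q M
  hM : ∀ M N : L, M ≠ N → ∃! x : P, I x M ∧ I x N
  hJ' : ∀ p q : P', p ≠ q → ∃! M : L', I' p M ∧ I' q M
  hM' : ∀ M N : L', M ≠ N → ∃! x : P', I' x M ∧ I' x N
  h3' : ∀ (M : L') (a b : P'), ∃ x : P', I' x M ∧ x ≠ a ∧ x ≠ b
  h3d' : ∀ (x : P') (M N : L'), ∃ C : L', I' x C ∧ C ≠ M ∧ C ≠ N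
  hpi : Function.Surjective pi
  hlam : Function.Surjective lam
  hinc : ∀ p M, I p M → I' (pi p) (lam M)

namespace EpiCtx

variable {P L P' L' : Type*} (E : EpiCtx P L P' L')

def dual : EpiCtx L P L' P' where
  I := fun M p => E.I p M
  I' := fun M p => E.I' p M
  pi := E.lam
  lam := E.pi
  hJ := E.hM
  hM := E.hJ
  hJ' := E.hM'
  hM' := E.hJ'
  h3' := E.h3d'
  h3d' := E.h3'
  hpi := E.hlam
  hlam := E.hpi
  hinc := fun M p h => E.hinc p M h

lemma uniqL {p q : P} {G H : L} (hpq : p ≠ q) (h1 : E.I p G) (h2 : E.I q G)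
    (h3 : E.I p H) (h4 : E.I q H) : G = H :=
  (E.hJ p q hpq).unique ⟨h1, h2⟩ ⟨h3, h4⟩

lemma uniqP {G H : L} {p q : P} (hGH : G ≠ H) (h1 : E.I p G) (h2 : E.I p H)
    (h3 : E.I q G) (h4 : E.I q H) : p = q :=
  (E.hM _ _ hGH).unique ⟨h1, h2⟩ ⟨h3, h4⟩

lemma uniqL' {p q : P'} {G H : L'} (hpq : p ≠ q) (h1 : E.I' p G) (h2 : E.I' q G)
    (h3 : E.I' p H) (h4 : E.I' q H) : G = H :=
  (E.hJ' p q hpq).unique ⟨h1, h2⟩ ⟨h3, h4⟩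

lemma uniqP' {G H : L'} {p q : P'} (hGH : G ≠ H) (h1 : E.I' p G) (h2 : E.I' p H)
    (h3 : E.I' q G) (h4 : E.I' q H) : p = q :=
  (E.hM' _ _ hGH).unique ⟨h1, h2⟩ ⟨h3, h4⟩

/-- Points of `M` lying over `v'`. -/
def F (v' : P') (M : L) : Set P := {w | E.I w M ∧ E.pi w = v'}

/-- Lines through `x` lying over `C'`. -/
def K (x : P) (C' : L') : Set L := {N | E.I x N ∧ E.lam N = C'}

/-- E1: the image of a line is covered: any point of `lam M` has a preimage on `M`. -/
lemma F_nonempty {M : L} {x' : P'} (h : E.I' x' (E.lam M)) : (E.F x' M).Nonempty := by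
  obtain ⟨N', hxN', hne, -⟩ := E.h3d' x' (E.lam M) (E.lam M)
  obtain ⟨N, hN⟩ := E.hlam N'
  have hNM : N ≠ M := fun h' => hne (by rw [← hN, h'])
  obtain ⟨z, ⟨hzN, hzM⟩, -⟩ := E.hM N M hNM
  have h1 : E.I' (E.pi z) N' := hN ▸ E.hinc z N hzN
  have h2 : E.I' (E.pi z) (E.lam M) := E.hinc z M hzM
  have : E.pi z = x' := E.uniqP' hne h1 h2 hxN' h
  exact ⟨z, hzM, this⟩

/-- E2: any line through `pi p` has a preimage through `p`. -/
lemma K_nonempty {p : P} {C' : L'} (h : E.I' (E.pi p) C') : (E.K p C').Nonempty := by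
  obtain ⟨q', hq'C, hq'ne, -⟩ := E.h3' C' (E.pi p) (E.pi p)
  obtain ⟨q, hq⟩ := E.hpi q'
  have hpq : p ≠ q := fun h' => hq'ne (by rw [← hq, h'])
  obtain ⟨N, ⟨hpN, hqN⟩, -⟩ := E.hJ p q hpq
  have h1 : E.I' (E.pi p) (E.lam N) := E.hinc p N hpN
  have h2 : E.I' q' (E.lam N) := hq ▸ E.hinc q N hqN
  have : E.lam N = C' := E.uniqL' (fun h' => hq'ne h'.symm) h1 h2 h hq'C
  exact ⟨N, hpN, this⟩

/-- The fundamental bijection between `K x C'` and `F v' M`. -/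
lemma bij1 {x : P} {C' : L'} {v' : P'} {M : L}
    (h1 : E.lam M ≠ C') (h2 : E.I' v' (E.lam M)) (h3 : E.I' v' C')
    (h4 : E.I' (E.pi x) C') (h5 : E.pi x ≠ v') :
    ((E.K x C').Finite ↔ (E.F v' M).Finite) ∧ (E.K x C').ncard = (E.F v' M).ncard := by
  apply card_helper (fun (N : L) (w : P) => E.I w N)
  · rintro N ⟨hxN, hNC⟩
    have hNM : N ≠ M := fun h' => h1 (by rw [← h']; exact hNC)
    obtain ⟨w, ⟨hwN, hwM⟩, -⟩ := E.hM N M hNM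
    have hw1 : E.I' (E.pi w) C' := hNC ▸ E.hinc w N hwN
    have hw2 : E.I' (E.pi w) (E.lam M) := E.hinc w M hwM
    have : E.pi w = v' := E.uniqP' (Ne.symm h1) hw1 hw2 h3 h2
    exact ⟨w, ⟨hwM, this⟩, hwN⟩
  · rintro w ⟨hwM, hwv⟩
    have hxw : x ≠ w := fun h' => h5 (by rw [h', hwv])
    obtain ⟨N, ⟨hxN, hwN⟩, -⟩ := E.hJ x w hxw
    have hn1 : E.I' (E.pi x) (E.lam N) := E.hinc x N hxN
    have hn2 : E.I' v' (E.lam N) := hwv ▸ E.hinc w N hwN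
    have : E.lam N = C' := E.uniqL' h5 hn1 hn2 h4 h3
    exact ⟨N, ⟨hxN, this⟩, hwN⟩
  · rintro N₁ N₂ w ⟨hxN₁, -⟩ ⟨hxN₂, -⟩ ⟨-, hwv⟩ hw1 hw2
    have hxw : x ≠ w := fun h' => h5 (by rw [h', hwv])
    exact E.uniqL hxw hxN₁ hw1 hxN₂ hw2
  · rintro N w₁ w₂ ⟨-, hNC⟩ ⟨hw₁M, -⟩ ⟨hw₂M, -⟩ hr₁ hr₂
    have hNM : N ≠ M := fun h' => h1 (by rw [← h']; exact hNC)
    exact E.uniqP hNM hr₁ hw₁M hr₂ hw₂M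

/-- A point off two given lines of the target plane. -/
lemma off2 (p₀ : P') (L₁' L₂' : L') : ∃ x', ¬ E.I' x' L₁' ∧ ¬ E.I' x' L₂' := by
  by_cases hne : L₁' = L₂'
  · subst hne
    obtain ⟨t', ht', -, -⟩ := E.h3' L₁' p₀ p₀
    obtain ⟨D', htD', hD'ne, -⟩ := E.h3d' t' L₁' L₁'
    obtain ⟨u', hu'D, hu't, -⟩ := E.h3' D' t' t'
    have : ¬ E.I' u' L₁' := fun h => hD'ne (E.uniqL' hu't hu'D htD' h ht')
    exact ⟨u', this, this⟩
  · obtain ⟨t', ⟨ht'1, ht'2⟩, -⟩ := E.hM' L₁' L₂' hne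
    obtain ⟨p₁', hp₁, hp₁t, -⟩ := E.h3' L₁' t' t'
    obtain ⟨p₂', hp₂, hp₂t, hp₂p₁⟩ := E.h3' L₂' t' p₁'
    have hp12 : p₁' ≠ p₂' := fun h => hp₂p₁ h.symm
    obtain ⟨G, ⟨hG1, hG2⟩, -⟩ := E.hJ' p₁' p₂' hp12
    obtain ⟨x', hxG, hxp₁, hxp₂⟩ := E.h3' G p₁' p₂'
    refine ⟨x', ?_, ?_⟩
    · intro h
      have hGL : G = L₁' := E.uniqL' hxp₁ hxG hG1 h hp₁
      have : p₂' = t' := E.uniqP' hne (hGL ▸ hG2) hp₂ ht'1 ht'2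
      exact hp₂t this
    · intro h
      have hGL : G = L₂' := E.uniqL' hxp₂ hxG hG2 h hp₂
      have : p₁' = t' := E.uniqP' hne hp₁ (hGL ▸ hG1) ht'1 ht'2
      exact hp₁t this


lemma const (z' : P') (hfin : (E.pi ⁻¹' {z'}).Finite) (W : L') :
    ∃ c : ℕ, 1 ≤ c ∧
      (∀ v' M, E.I' v' (E.lam M) → (E.F v' M).Finite ∧ (E.F v' M).ncard = c) ∧
      (∀ x C', E.I' (E.pi x) C' → (E.K x C').Finite ∧ (E.K x C').ncard = c) := by
  classical
  have hFz_fin : ∀ M : L, (E.F z' M).Finite := fun M => hfin.subset (fun w hw => hw.2)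
  obtain ⟨L₀', hzL₀, -, -⟩ := E.h3d' z' W W
  obtain ⟨M₀, hM₀⟩ := E.hlam L₀'
  have hzM₀ : E.I' z' (E.lam M₀) := by rw [hM₀]; exact hzL₀
  set c := (E.F z' M₀).ncard with hc
  have stepA : ∀ M₁, E.I' z' (E.lam M₁) → (E.F z' M₁).ncard = c := by
    intro M₁ hz₁
    obtain ⟨x', hx0, hx1⟩ := E.off2 z' (E.lam M₀) (E.lam M₁)
    have hxz : x' ≠ z' := fun h => hx0 (by rw [h]; exact hzM₀)
    obtain ⟨C', ⟨hxC, hzC⟩, -⟩ := E.hJ' x' z' hxz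
    obtain ⟨x, hx⟩ := E.hpi x'
    have h4 : E.I' (E.pi x) C' := by rw [hx]; exact hxC
    have h5 : E.pi x ≠ z' := by rw [hx]; exact hxz
    have b₀ := E.bij1 (x := x) (C' := C') (v' := z') (M := M₀)
      (fun h => hx0 (by rw [h]; exact hxC)) hzM₀ hzC h4 h5
    have b₁ := E.bij1 (x := x) (C' := C') (v' := z') (M := M₁)
      (fun h => hx1 (by rw [h]; exact hxC)) hz₁ hzC h4 h5
    rw [← b₁.2, b₀.2]
  have key : ∀ v' M, E.I' v' (E.lam M) → (E.F v' M).Finite ∧ (E.F v' M).ncard = c := by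
    intro v' M hvM
    by_cases hvz : v' = z'
    · subst hvz; exact ⟨hFz_fin M, stepA M hvM⟩
    · obtain ⟨J', ⟨hvJ, hzJ⟩, -⟩ := E.hJ' v' z' hvz
      obtain ⟨L₂', hzL₂, hL₂J, -⟩ := E.h3d' z' J' J'
      obtain ⟨M₂, hM₂⟩ := E.hlam L₂'
      obtain ⟨C₀', hvC₀, hC₀J, -⟩ := E.h3d' v' J' J'
      obtain ⟨Mv, hMv⟩ := E.hlam C₀'
      have hvMv : E.I' v' (E.lam Mv) := by rw [hMv]; exact hvC₀
      obtain ⟨x₁', hx₁M, hx₁C₀⟩ := E.off2 z' (E.lam M) C₀'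
      have hx₁v : x₁' ≠ v' := fun h => hx₁C₀ (by rw [h]; exact hvC₀)
      obtain ⟨C₁', ⟨hx₁C₁, hvC₁⟩, -⟩ := E.hJ' x₁' v' hx₁v
      obtain ⟨x₁, hx₁⟩ := E.hpi x₁'
      obtain ⟨x', hx'J, hx'z, hx'v⟩ := E.h3' J' z' v'
      obtain ⟨x, hx⟩ := E.hpi x'
      have b1 := E.bij1 (x := x₁) (C' := C₁') (v' := v') (M := M)
        (fun h => hx₁M (by rw [h]; exact hx₁C₁)) hvM hvC₁
        (by rw [hx₁]; exact hx₁C₁) (by rw [hx₁]; exact hx₁v)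
      have b2 := E.bij1 (x := x₁) (C' := C₁') (v' := v') (M := Mv)
        (fun h => hx₁C₀ (by rw [← hMv, h]; exact hx₁C₁)) hvMv hvC₁
        (by rw [hx₁]; exact hx₁C₁) (by rw [hx₁]; exact hx₁v)
      have b3 := E.bij1 (x := x) (C' := J') (v' := v') (M := Mv)
        (by rw [hMv]; exact hC₀J) hvMv hvJ
        (by rw [hx]; exact hx'J) (by rw [hx]; exact hx'v)
      have b4 := E.bij1 (x := x) (C' := J') (v' := z') (M := M₂)
        (by rw [hM₂]; exact hL₂J) (by rw [hM₂]; exact hzL₂) hzJ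
        (by rw [hx]; exact hx'J) (by rw [hx]; exact hx'z)
      have hzM₂ : E.I' z' (E.lam M₂) := by rw [hM₂]; exact hzL₂
      constructor
      · exact b1.1.mp (b2.1.mpr (b3.1.mp (b4.1.mpr (hFz_fin M₂))))
      · rw [← b1.2, b2.2, ← b3.2, b4.2, stepA M₂ hzM₂]
  have keyK : ∀ x C', E.I' (E.pi x) C' → (E.K x C').Finite ∧ (E.K x C').ncard = c := by
    intro x C' hxC
    obtain ⟨v', hvC, hvx, -⟩ := E.h3' C' (E.pi x) (E.pi x)
    obtain ⟨D', hvD, hDC, -⟩ := E.h3d' v' C' C'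
    obtain ⟨M, hM⟩ := E.hlam D'
    have hvM : E.I' v' (E.lam M) := by rw [hM]; exact hvD
    have b := E.bij1 (x := x) (C' := C') (v' := v') (M := M)
      (by rw [hM]; exact hDC) hvM hvC hxC (fun h => hvx h.symm)
    have kf := key v' M hvM
    exact ⟨b.1.mpr kf.1, b.2.trans kf.2⟩
  have hc1 : 1 ≤ c :=
    (Set.ncard_pos (hFz_fin M₀)).mpr (E.F_nonempty hzM₀)
  exact ⟨c, hc1, key, keyK⟩

theorem main (p q : P) (hne : p ≠ q) (heq : E.pi p = E.pi q) (z' : P')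
    (hfin : (E.pi ⁻¹' {z'}).Finite) : False := by
  classical
  obtain ⟨J, ⟨hpJ, hqJ⟩, hJu⟩ := E.hJ p q hne
  obtain ⟨c, hc1, hF, hK⟩ := E.const z' hfin (E.lam J)
  obtain ⟨L₁', hzL₁, -, -⟩ := E.h3d' z' (E.lam J) (E.lam J)
  obtain ⟨L₂', hzL₂, hL₂₁, -⟩ := E.h3d' z' L₁' L₁'
  obtain ⟨g₁', hg₁L₁, hg₁z, -⟩ := E.h3' L₁' z' z'
  obtain ⟨g, hg⟩ := E.hpi g₁'
  set S : Set P := E.pi ⁻¹' {z'} with hS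
  have hKg := hK g L₁' (by rw [hg]; exact hg₁L₁)
  have hcover : S = ⋃ A ∈ hKg.1.toFinset, E.F z' A := by
    ext s
    simp only [Set.mem_iUnion, Set.Finite.mem_toFinset]
    constructor
    · intro hs
      have hsz : E.pi s = z' := hs
      have hgs : g ≠ s := fun h => hg₁z (by rw [← hg, h, hsz])
      obtain ⟨A, ⟨hgA, hsA⟩, -⟩ := E.hJ g s hgs
      have hlamA : E.lam A = L₁' := by
        refine E.uniqL' hg₁z ?_ ?_ hg₁L₁ hzL₁
        · rw [← hg]; exact E.hinc g A hgA
        · rw [← hsz]; exact E.hinc s A hsA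
      exact ⟨A, ⟨hgA, hlamA⟩, hsA, hsz⟩
    · rintro ⟨A, -, -, hsz⟩
      exact hsz
  have hdisj : ∀ A₁ ∈ hKg.1.toFinset, ∀ A₂ ∈ hKg.1.toFinset, A₁ ≠ A₂ →
      Disjoint (E.F z' A₁) (E.F z' A₂) := by
    intro A₁ hA₁ A₂ hA₂ hA
    rw [Set.Finite.mem_toFinset] at hA₁ hA₂
    rw [Set.disjoint_left]
    rintro w ⟨hw1, hwz⟩ ⟨hw2, -⟩
    have hwg : w = g := E.uniqP hA hw1 hw2 hA₁.1 hA₂.1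
    exact hg₁z (by rw [← hg, ← hwg, hwz])
  have hmemF : ∀ A ∈ hKg.1.toFinset, E.I' z' (E.lam A) := by
    intro A hA
    rw [Set.Finite.mem_toFinset] at hA
    rw [hA.2]; exact hzL₁
  have hcard : hKg.1.toFinset.card = c := by
    rw [← Set.ncard_eq_toFinset_card _ hKg.1]; exact hKg.2
  have hm : S.ncard = c * c := by
    rw [hcover, ncard_biUnion_eq _ _ (fun A hA => (hF z' A (hmemF A hA)).1) hdisj]
    rw [Finset.sum_congr rfl (fun A hA => (hF z' A (hmemF A hA)).2), Finset.sum_const,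
      smul_eq_mul, hcard]
  rcases Nat.lt_or_ge c 2 with hc2 | hc2
  · -- c = 1 : Lemma-A style contradiction
    have hceq : c = 1 := by omega
    have hm1 : S.ncard = 1 := by rw [hm, hceq]
    obtain ⟨y, hy⟩ := Set.ncard_eq_one.mp hm1
    by_cases haz : E.pi p = z'
    · have hp : p ∈ S := haz
      have hq : q ∈ S := show E.pi q = z' by rw [← heq]; exact haz
      rw [hy] at hp hq
      exact hne (hp.trans hq.symm)
    · obtain ⟨J₀', ⟨haJ₀, hzJ₀⟩, -⟩ := E.hJ' (E.pi p) z' haz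
      obtain ⟨C₁', haC₁, hC₁J₀, -⟩ := E.h3d' (E.pi p) J₀' J₀'
      obtain ⟨C₂', haC₂, hC₂J₀, hC₂C₁⟩ := E.h3d' (E.pi p) J₀' C₁'
      obtain ⟨M₁, hpM₁, hlM₁⟩ := E.K_nonempty (p := p) haC₁
      obtain ⟨M₂, hqM₂, hlM₂⟩ := E.K_nonempty (p := q) (C' := C₂') (by rw [← heq]; exact haC₂)
      have hM12 : M₁ ≠ M₂ := fun h => hC₂C₁ (by rw [← hlM₂, ← h, hlM₁])
      obtain ⟨y₀, ⟨hy₀M₁, hy₀M₂⟩, -⟩ := E.hM M₁ M₂ hM12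
      have hy₀a : E.pi y₀ = E.pi p := by
        refine E.uniqP' (fun h => hC₂C₁ h.symm) ?_ ?_ haC₁ haC₂
        · rw [← hlM₁]; exact E.hinc y₀ M₁ hy₀M₁
        · rw [← hlM₂]; exact E.hinc y₀ M₂ hy₀M₂
      have hFa₁ := hF (E.pi p) M₁ (by rw [hlM₁]; exact haC₁)
      have hcard₁ : (E.F (E.pi p) M₁).ncard = 1 := by rw [hFa₁.2, hceq]
      obtain ⟨w, hw⟩ := Set.ncard_eq_one.mp hcard₁
      have hpw : p ∈ E.F (E.pi p) M₁ := ⟨hpM₁, rfl⟩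
      have hyw : y₀ ∈ E.F (E.pi p) M₁ := ⟨hy₀M₁, hy₀a⟩
      rw [hw] at hpw hyw
      have hpy : p = y₀ := hpw.trans hyw.symm
      have hFa₂ := hF (E.pi p) M₂ (by rw [hlM₂]; exact haC₂)
      have hcard₂ : (E.F (E.pi p) M₂).ncard = 1 := by rw [hFa₂.2, hceq]
      obtain ⟨w₂, hw₂⟩ := Set.ncard_eq_one.mp hcard₂
      have hqw : q ∈ E.F (E.pi p) M₂ := ⟨hqM₂, heq.symm⟩
      have hyw₂ : y₀ ∈ E.F (E.pi p) M₂ := ⟨hy₀M₂, hy₀a⟩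
      rw [hw₂] at hqw hyw₂
      exact hne (hpy.trans (hyw₂.trans hqw.symm))
  · -- c ≥ 2 : counting contradiction
    obtain ⟨s₀, hs₀⟩ := E.hpi z'
    have hs₀S : s₀ ∈ S := hs₀
    have hB₁ := hK s₀ L₁' (by rw [hs₀]; exact hzL₁)
    have hB₂ := hK s₀ L₂' (by rw [hs₀]; exact hzL₂)
    have hdisjB : Disjoint (E.K s₀ L₁') (E.K s₀ L₂') := by
      rw [Set.disjoint_left]
      rintro A ⟨-, h1⟩ ⟨-, h2⟩
      exact hL₂₁ (by rw [← h2, h1])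
    have hBfin : (E.K s₀ L₁' ∪ E.K s₀ L₂').Finite := hB₁.1.union hB₂.1
    have hBcard : (E.K s₀ L₁' ∪ E.K s₀ L₂').ncard = 2 * c := by
      rw [Set.ncard_union_eq hdisjB hB₁.1 hB₂.1, hB₁.2, hB₂.2]; ring
    have hBmem : ∀ A ∈ E.K s₀ L₁' ∪ E.K s₀ L₂', E.I s₀ A ∧ E.I' z' (E.lam A) := by
      rintro A (⟨h1, h2⟩ | ⟨h1, h2⟩)
      · exact ⟨h1, by rw [h2]; exact hzL₁⟩
      · exact ⟨h1, by rw [h2]; exact hzL₂⟩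
    set T : Set P := ⋃ A ∈ hBfin.toFinset, (E.F z' A \ {s₀}) with hT
    have hTcard : T.ncard = 2 * c * (c - 1) := by
      rw [hT, ncard_biUnion_eq _ _ ?hf ?hd]
      case hf =>
        intro A hA
        rw [Set.Finite.mem_toFinset] at hA
        exact ((hF z' A (hBmem A hA).2).1).diff
      case hd =>
        intro A₁ hA₁ A₂ hA₂ hAne
        rw [Set.Finite.mem_toFinset] at hA₁ hA₂
        rw [Set.disjoint_left]
        rintro w ⟨⟨hw1, hwz⟩, hws⟩ ⟨⟨hw2, -⟩, -⟩
        exact hws (E.uniqP hAne hw1 hw2 (hBmem A₁ hA₁).1 (hBmem A₂ hA₂).1)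
      have hsum : ∀ A ∈ hBfin.toFinset, (E.F z' A \ {s₀}).ncard = c - 1 := by
        intro A hA
        rw [Set.Finite.mem_toFinset] at hA
        obtain ⟨h1, h2⟩ := hBmem A hA
        have hFA := hF z' A h2
        have hs₀F : s₀ ∈ E.F z' A := ⟨h1, hs₀⟩
        rw [Set.ncard_diff_singleton_of_mem hs₀F, hFA.2]
      rw [Finset.sum_congr rfl hsum, Finset.sum_const, smul_eq_mul,
        ← Set.ncard_eq_toFinset_card _ hBfin, hBcard]
    have hTfin : T.Finite := by
      refine hfin.subset ?_
      intro w hw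
      rw [hT] at hw
      simp only [Set.mem_iUnion, Set.Finite.mem_toFinset] at hw
      obtain ⟨A, hA, ⟨-, hwz⟩, -⟩ := hw
      exact hwz
    have hs₀T : s₀ ∉ T := by
      rw [hT]
      simp only [Set.mem_iUnion, Set.Finite.mem_toFinset]
      rintro ⟨A, hA, -, hws⟩
      exact hws rfl
    have hsub : insert s₀ T ⊆ S := by
      rintro w (rfl | hw)
      · exact hs₀S
      · rw [hT] at hw
        simp only [Set.mem_iUnion, Set.Finite.mem_toFinset] at hw
        obtain ⟨A, hA, ⟨-, hwz⟩, -⟩ := hw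
        exact hwz
    have hineq : T.ncard + 1 ≤ S.ncard := by
      rw [← Set.ncard_insert_of_notMem hs₀T hTfin]
      exact Set.ncard_le_ncard hsub hfin
    rw [hTcard, hm] at hineq
    obtain ⟨k, rfl⟩ : ∃ k, c = k + 2 := ⟨c - 2, by omega⟩
    have e1 : k + 2 - 1 = k + 1 := by omega
    rw [e1] at hineq
    nlinarith [hineq]

end EpiCtx
end SHP

/-- Skornjakov–Hughes–Pasini: an epimorphism between projective planes is either an
isomorphism (both maps are bijective) or all of its point-fibers and line-fibers are
infinite. -/
theorem epimorphism_bijective_or_fibers_infinite {P L P' L' : Type*}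
    (I : P → L → Prop) (I' : P' → L' → Prop)
    (hplane : IsProjectivePlane I) (hplane' : IsProjectivePlane I')
    (π : P → P') (lam : L → L')
    (hπ : Function.Surjective π) (hlam : Function.Surjective lam)
    (hinc : ∀ p M, I p M → I' (π p) (lam M)) :
    (Function.Bijective π ∧ Function.Bijective lam) ∨
      ((∀ p' : P', (π ⁻¹' {p'}).Infinite) ∧ (∀ M' : L', (lam ⁻¹' {M'}).Infinite)) := by
  classical
  have hJ' := hplane'.line_unique
  have hM' := hplane'.point_unique
  have h3d' : ∀ (x : P') (M N : L'), ∃ C, I' x C ∧ C ≠ M ∧ C ≠ N :=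
    SHP.three_lines I' hJ' hM' hplane'.nondeg
  have h3' : ∀ (M : L') (a b : P'), ∃ x, I' x M ∧ x ≠ a ∧ x ≠ b :=
    SHP.three_lines (fun (M : L') (x : P') => I' x M) hM' hJ'
      (SHP.quad_dual I' hJ' hM' hplane'.nondeg)
  set E : SHP.EpiCtx P L P' L' :=
    { I := I, I' := I', pi := π, lam := lam,
      hJ := hplane.line_unique, hM := hplane.point_unique,
      hJ' := hJ', hM' := hM', h3' := h3', h3d' := h3d',
      hpi := hπ, hlam := hlam, hinc := hinc } with hE
  by_cases hinj : Function.Injective π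
  · left
    refine ⟨⟨hinj, hπ⟩, ?_, hlam⟩
    intro M N hMN
    by_contra hne
    obtain ⟨x, ⟨hxM, hxN⟩, -⟩ := hplane.point_unique M N hne
    obtain ⟨p', hp'M, hp'x, -⟩ := h3' (lam M) (π x) (π x)
    obtain ⟨u, huM, hup⟩ := E.F_nonempty (M := M) (x' := p') hp'M
    obtain ⟨v, hvN, hvp⟩ := E.F_nonempty (M := N) (x' := p') (show I' p' (lam N) by rw [← hMN]; exact hp'M)
    have huv : u = v := hinj (show E.pi u = E.pi v by rw [hup, hvp])
    have hux : u = x := E.uniqP hne huM (huv.symm ▸ hvN) hxM hxN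
    exact hp'x (by rw [← hup, hux])
  · right
    obtain ⟨p, q, heq, hne⟩ := Function.not_injective_iff.mp hinj
    constructor
    · intro z'
      by_contra h
      rw [Set.not_infinite] at h
      exact E.main p q hne heq z' h
    · intro M'
      obtain ⟨J, ⟨hpJ, hqJ⟩, hJu⟩ := hplane.line_unique p q hne
      obtain ⟨C', hC'a, hC'ne, -⟩ := h3d' (π p) (lam J) (lam J)
      obtain ⟨M₁, hpM₁, hlM₁⟩ := E.K_nonempty (p := p) (C' := C') hC'a
      obtain ⟨M₂, hqM₂, hlM₂⟩ := E.K_nonempty (p := q) (C' := C') (show I' (π q) C' by rw [← heq]; exact hC'a)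
      have hM12 : M₁ ≠ M₂ := by
        intro h
        have hJ1 : M₁ = J := hJu M₁ ⟨hpM₁, h.symm ▸ hqM₂⟩
        exact hC'ne (by rw [← hlM₁, hJ1])
      have hleq : E.dual.pi M₁ = E.dual.pi M₂ := hlM₁.trans hlM₂.symm
      by_contra h
      rw [Set.not_infinite] at h
      exact E.dual.main M₁ M₂ hM12 hleq M' h
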